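/- If U ~ N(0, σ²I_d) is independent of the discrete random variable X on ℝ^d which takes at least two distinct values with positive probability, then MI(X; X + U) > 0 for every σ > 0, and MI(X; X + U) → H(X) as σ → 0, where H(X) is the Shannon entropy of X. -/

import Mathlib

open MeasureTheory Real Matrix Filter

set_option maxHeartbeats 1000000

/-- Multivariate Gaussian density `N(z; m, S)` on `ℝ^d`. -/
noncomputable def gaussDensity (d : ℕ) (m : Fin d → ℝ) (S : Matrix (Fin d) (Fin d) ℝ)
    (z : Fin d → ℝ) : ℝ :=
  (2 * π) ^ (-(d : ℝ) / 2) * S.det ^ (-(1 : ℝ) / 2) *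
    Real.exp (-(1 / 2) * ((z - m) ⬝ᵥ (S⁻¹ *ᵥ (z - m))))

/-- Differential entropy `h(p) = -∫ p log p` of a density on `ℝ^d`. -/
noncomputable def diffEntropy (d : ℕ) (p : (Fin d → ℝ) → ℝ) : ℝ :=
  - ∫ z, p z * Real.log (p z)

/-- Mutual information `MI(X; X + U)` for discrete `X` (values `x i`, weights `ω i`)
and independent isotropic Gaussian noise `U ~ N(0, σ²I)`: the mixture entropy minus
the weighted component entropies. -/
noncomputable def constNoiseMI (d n : ℕ) (x : Fin n → (Fin d → ℝ)) (ω : Fin n → ℝ)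
    (σ : ℝ) : ℝ :=
  diffEntropy d (fun z => ∑ i, ω i * gaussDensity d (x i) (σ ^ 2 • (1 : Matrix (Fin d) (Fin d) ℝ)) z) -
    ∑ i, ω i * diffEntropy d (gaussDensity d (x i) (σ ^ 2 • (1 : Matrix (Fin d) (Fin d) ℝ)))

section AuxGauss

variable {d : ℕ}

/-- normalization constant of the isotropic Gaussian -/
noncomputable def gC (d : ℕ) (σ : ℝ) : ℝ := (2*π) ^ (-(d:ℝ)/2) * σ ^ (-(d:ℝ))

/-- the isotropic Gaussian density written with dot products -/
noncomputable def gF (d : ℕ) (σ : ℝ) (m z : Fin d → ℝ) : ℝ :=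
  gC d σ * Real.exp (-(1/(2*σ^2)) * ((z - m) ⬝ᵥ (z - m)))

lemma gC_pos {σ : ℝ} (hσ : 0 < σ) : 0 < gC d σ :=
  mul_pos (Real.rpow_pos_of_pos (by positivity) _) (Real.rpow_pos_of_pos hσ _)

lemma gF_pos {σ : ℝ} (hσ : 0 < σ) (m z : Fin d → ℝ) : 0 < gF d σ m z :=
  mul_pos (gC_pos hσ) (Real.exp_pos _)

lemma dotProduct_self_nonneg (v : Fin d → ℝ) : 0 ≤ v ⬝ᵥ v :=
  Finset.sum_nonneg fun i _ => mul_self_nonneg _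

lemma dot_expand (u v : Fin d → ℝ) :
    (u - v) ⬝ᵥ (u - v) = u ⬝ᵥ u - 2*(u ⬝ᵥ v) + v ⬝ᵥ v := by
  rw [sub_dotProduct, dotProduct_sub, dotProduct_sub, dotProduct_comm v u]; ring

lemma two_dot_le (u v : Fin d → ℝ) : 2*(u ⬝ᵥ v) ≤ u ⬝ᵥ u + v ⬝ᵥ v := by
  have := dotProduct_self_nonneg (u - v)
  rw [dot_expand] at this; linarith

lemma continuous_qd (m : Fin d → ℝ) : Continuous fun z : Fin d → ℝ => (z - m) ⬝ᵥ (z - m) := by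
  unfold dotProduct
  exact continuous_finset_sum _ fun i _ =>
    (((continuous_apply i).sub continuous_const).mul ((continuous_apply i).sub continuous_const))

lemma continuous_gF (σ : ℝ) (m : Fin d → ℝ) : Continuous (gF d σ m) :=
  continuous_const.mul ((continuous_const.mul (continuous_qd m)).rexp)

/-- `gaussDensity` with isotropic covariance equals `gF`. -/
lemma gaussDensity_eq {σ : ℝ} (hσ : 0 < σ) (m : Fin d → ℝ) :
    gaussDensity d m (σ^2 • (1 : Matrix (Fin d) (Fin d) ℝ)) = gF d σ m := by
  funext z
  have hinv : (σ^2 • (1 : Matrix (Fin d) (Fin d) ℝ))⁻¹ = (σ^2)⁻¹ • 1 := by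
    apply Matrix.inv_eq_right_inv
    rw [Matrix.smul_mul, Matrix.mul_smul, one_mul, smul_smul, mul_inv_cancel₀ (by positivity)]
    simp
  have hdet : (σ^2 • (1 : Matrix (Fin d) (Fin d) ℝ)).det = (σ^2)^d := by
    rw [Matrix.det_smul, Matrix.det_one, mul_one, Fintype.card_fin]
  have hdet2 : ((σ^2)^d : ℝ) ^ (-(1:ℝ)/2) = σ ^ (-(d:ℝ)) := by
    rw [← Real.rpow_natCast (σ^2) d, ← Real.rpow_natCast σ 2, ← Real.rpow_mul hσ.le,
      ← Real.rpow_mul hσ.le]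
    congr 1
    push_cast
    ring
  rw [gaussDensity, hinv, hdet, hdet2, gF, gC, smul_mulVec, one_mulVec, dotProduct_smul,
    smul_eq_mul]
  ring_nf

end AuxGauss

section AuxInt
variable {d : ℕ}

lemma integrable_exp_neg_q {b : ℝ} (hb : 0 < b) (m : Fin d → ℝ) :
    Integrable (fun z : Fin d → ℝ => Real.exp (-b * ((z - m) ⬝ᵥ (z - m)))) := by
  have h0 : Integrable (fun v : Fin d → ℝ => Real.exp (-b * (v ⬝ᵥ v))) := by
    have : ∀ v : Fin d → ℝ, Real.exp (-b * (v ⬝ᵥ v)) = ∏ i, Real.exp (-b * (v i)^2) := by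
      intro v
      rw [← Real.exp_sum]; congr 1; rw [dotProduct, Finset.mul_sum]; congr 1; ext i; ring
    simp_rw [this]
    exact Integrable.fintype_prod (fun i => integrable_exp_neg_mul_sq hb)
  exact h0.comp_sub_right m

lemma integral_exp_neg_q {b : ℝ} (hb : 0 < b) (m : Fin d → ℝ) :
    ∫ z : Fin d → ℝ, Real.exp (-b * ((z - m) ⬝ᵥ (z - m))) = (π / b) ^ ((d:ℝ)/2) := by
  rw [integral_sub_right_eq_self (fun v : Fin d → ℝ => Real.exp (-b * (v ⬝ᵥ v))) m]
  have : ∀ v : Fin d → ℝ, Real.exp (-b * (v ⬝ᵥ v)) = ∏ i, Real.exp (-b * (v i)^2) := by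
    intro v
    rw [← Real.exp_sum]; congr 1; rw [dotProduct, Finset.mul_sum]; congr 1; ext i; ring
  simp_rw [this]
  rw [volume_pi, integral_fintype_prod_eq_pow (ι := Fin d) (fun x : ℝ => Real.exp (-b * x^2)), integral_gaussian,
    Fintype.card_fin, ← Real.rpow_natCast (√(π/b)) d, Real.sqrt_eq_rpow,
    ← Real.rpow_mul (by positivity)]
  ring_nf

/-- pointwise polynomial-times-gaussian bound -/
lemma poly_gauss_le {A B b t : ℝ} (hA : 0 ≤ A) (hB : 0 ≤ B) (hb : 0 < b) (ht : 0 ≤ t) :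
    (A + B*t) * Real.exp (-b*t) ≤ (A + 2*B/b) * Real.exp (-(b/2)*t) := by
  have h1 : Real.exp (-b*t) ≤ Real.exp (-(b/2)*t) := by
    apply Real.exp_le_exp.2; nlinarith
  have hsplit : Real.exp (-b*t) = Real.exp (-(b/2)*t) * Real.exp (-(b/2)*t) := by
    rw [← Real.exp_add]; ring_nf
  have h3 : (b/2)*t ≤ Real.exp ((b/2)*t) := by
    have := Real.add_one_le_exp ((b/2)*t); linarith
  have h4 : t * Real.exp (-(b/2)*t) ≤ 2/b := by
    have he : Real.exp ((b/2)*t) * Real.exp (-(b/2)*t) = 1 := by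
      rw [← Real.exp_add]; ring_nf; exact Real.exp_zero
    have hpos : (0:ℝ) < Real.exp (-(b/2)*t) := Real.exp_pos _
    have : t ≤ (2/b) * Real.exp ((b/2)*t) := by
      rw [div_mul_eq_mul_div, le_div_iff₀ hb]
      nlinarith
    calc t * Real.exp (-(b/2)*t) ≤ ((2/b) * Real.exp ((b/2)*t)) * Real.exp (-(b/2)*t) := by
          apply mul_le_mul_of_nonneg_right this hpos.le
      _ = 2/b := by rw [mul_assoc, he, mul_one]
  have h5 : B*t * Real.exp (-b*t) ≤ (2*B/b) * Real.exp (-(b/2)*t) := by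
    rw [hsplit, ← mul_assoc]
    have : B * t * Real.exp (-(b/2)*t) ≤ B * (2/b) := by
      rw [mul_assoc]; exact mul_le_mul_of_nonneg_left h4 hB
    calc B*t * Real.exp (-(b/2)*t) * Real.exp (-(b/2)*t)
        ≤ (B * (2/b)) * Real.exp (-(b/2)*t) := mul_le_mul_of_nonneg_right this (Real.exp_pos _).le
      _ = (2*B/b) * Real.exp (-(b/2)*t) := by ring
  have h6 : A * Real.exp (-b*t) ≤ A * Real.exp (-(b/2)*t) := mul_le_mul_of_nonneg_left h1 hA
  nlinarith [Real.exp_pos (-(b/2)*t)]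

/-- master integrability lemma: anything dominated by (quadratic)·gaussian is integrable -/
lemma integrable_dom {f : (Fin d → ℝ) → ℝ} (hf : AEStronglyMeasurable f volume)
    {A B b : ℝ} (hA : 0 ≤ A) (hB : 0 ≤ B) (hb : 0 < b) (m : Fin d → ℝ)
    (hbd : ∀ z, |f z| ≤ (A + B * ((z-m) ⬝ᵥ (z-m))) * Real.exp (-b * ((z-m) ⬝ᵥ (z-m)))) :
    Integrable f := by
  apply Integrable.mono' (((integrable_exp_neg_q (half_pos hb) m)).const_mul (A + 2*B/b)) hf
  apply Filter.Eventually.of_forall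
  intro z
  calc ‖f z‖ ≤ (A + B * ((z-m) ⬝ᵥ (z-m))) * Real.exp (-b * ((z-m) ⬝ᵥ (z-m))) := hbd z
    _ ≤ (A + 2*B/b) * Real.exp (-(b/2) * ((z-m) ⬝ᵥ (z-m))) :=
        poly_gauss_le hA hB hb (Finset.sum_nonneg fun i _ => mul_self_nonneg _)

end AuxInt


noncomputable def pF (d n : ℕ) (x : Fin n → (Fin d → ℝ)) (ω : Fin n → ℝ) (σ : ℝ)
    (z : Fin d → ℝ) : ℝ := ∑ i, ω i * gF d σ (x i) z

noncomputable def KL (d n : ℕ) (x : Fin n → (Fin d → ℝ)) (ω : Fin n → ℝ) (σ : ℝ)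
    (i : Fin n) : ℝ :=
  ∫ z, gF d σ (x i) z * Real.log (pF d n x ω σ z / gF d σ (x i) z)

section Mix
variable {d n : ℕ} {x : Fin n → (Fin d → ℝ)} {ω : Fin n → ℝ} {σ : ℝ}

lemma integral_gF (hσ : 0 < σ) (m : Fin d → ℝ) : ∫ z, gF d σ m z = 1 := by
  have hb : (0:ℝ) < 1/(2*σ^2) := by positivity
  unfold gF
  rw [integral_const_mul, integral_exp_neg_q hb m]
  have h1 : π / (1/(2*σ^2)) = (2*π) * σ^2 := by field_simp
  rw [h1, Real.mul_rpow (by positivity) (by positivity)]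
  have h2 : ((σ^2 : ℝ)) ^ ((d:ℝ)/2) = σ ^ (d:ℝ) := by
    rw [← Real.rpow_natCast σ 2, ← Real.rpow_mul hσ.le]
    congr 1; push_cast; ring
  rw [h2, gC]
  rw [show (2*π) ^ (-(d:ℝ)/2) * σ ^ (-(d:ℝ)) * ((2*π) ^ ((d:ℝ)/2) * σ ^ (d:ℝ))
      = ((2*π) ^ (-(d:ℝ)/2) * (2*π) ^ ((d:ℝ)/2)) * (σ ^ (-(d:ℝ)) * σ ^ (d:ℝ)) by ring,
    ← Real.rpow_add (by positivity), ← Real.rpow_add hσ,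
    show -(d:ℝ)/2 + (d:ℝ)/2 = 0 by ring, show -(d:ℝ) + (d:ℝ) = 0 by ring,
    Real.rpow_zero, Real.rpow_zero, mul_one]

lemma integrable_gF (hσ : 0 < σ) (m : Fin d → ℝ) : Integrable (gF d σ m) := by
  unfold gF
  exact (integrable_exp_neg_q (show (0:ℝ) < 1/(2*σ^2) by positivity) m).const_mul _

lemma gF_le_gC (hσ : 0 < σ) (m z : Fin d → ℝ) : gF d σ m z ≤ gC d σ := by
  have : Real.exp (-(1/(2*σ^2)) * ((z - m) ⬝ᵥ (z - m))) ≤ 1 := by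
    rw [Real.exp_le_one_iff]
    have := dotProduct_self_nonneg (z - m)
    have : (0:ℝ) < 1/(2*σ^2) := by positivity
    nlinarith [dotProduct_self_nonneg (z - m)]
  calc gF d σ m z ≤ gC d σ * 1 := mul_le_mul_of_nonneg_left this (gC_pos hσ).le
    _ = gC d σ := mul_one _

lemma pF_pos (hσ : 0 < σ) (hω : ∀ i, 0 < ω i) (hn : 0 < n) (z : Fin d → ℝ) :
    0 < pF d n x ω σ z := by
  apply Finset.sum_pos (fun i _ => mul_pos (hω i) (gF_pos hσ _ z))
  exact ⟨⟨0, hn⟩, Finset.mem_univ _⟩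

lemma pF_ge (hσ : 0 < σ) (hω : ∀ i, 0 < ω i) (i : Fin n) (z : Fin d → ℝ) :
    ω i * gF d σ (x i) z ≤ pF d n x ω σ z :=
  Finset.single_le_sum (fun j _ => (mul_pos (hω j) (gF_pos hσ _ z)).le) (Finset.mem_univ i)

lemma pF_le_gC (hσ : 0 < σ) (hω : ∀ i, 0 < ω i) (hsum : ∑ i, ω i = 1) (z : Fin d → ℝ) :
    pF d n x ω σ z ≤ gC d σ := by
  calc pF d n x ω σ z ≤ ∑ i, ω i * gC d σ :=
        Finset.sum_le_sum fun i _ => mul_le_mul_of_nonneg_left (gF_le_gC hσ _ z) (hω i).le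
    _ = gC d σ := by rw [← Finset.sum_mul, hsum, one_mul]

lemma continuous_pF (σ : ℝ) : Continuous (pF d n x ω σ) :=
  continuous_finset_sum _ fun i _ => continuous_const.mul (continuous_gF σ (x i))

lemma log_gF (hσ : 0 < σ) (m z : Fin d → ℝ) :
    Real.log (gF d σ m z) = Real.log (gC d σ) + (-(1/(2*σ^2)) * ((z - m) ⬝ᵥ (z - m))) := by
  rw [gF, Real.log_mul (gC_pos hσ).ne' (Real.exp_pos _).ne', Real.log_exp]

lemma abs_log_pF_le (hσ : 0 < σ) (hω : ∀ i, 0 < ω i) (hsum : ∑ i, ω i = 1) (i : Fin n)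
    (z : Fin d → ℝ) :
    |Real.log (pF d n x ω σ z)| ≤
      |Real.log (gC d σ)| + |Real.log (ω i)| + (1/(2*σ^2)) * ((z - x i) ⬝ᵥ (z - x i)) := by
  have hq := dotProduct_self_nonneg (z - x i)
  have hb : (0:ℝ) < 1/(2*σ^2) := by positivity
  have hn : 0 < n := i.pos
  have hppos := pF_pos (x := x) hσ hω hn z
  rw [abs_le]
  constructor
  · have h1 : Real.log (ω i) + Real.log (gF d σ (x i) z) ≤ Real.log (pF d n x ω σ z) := by
      rw [← Real.log_mul (hω i).ne' (gF_pos hσ _ z).ne']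
      exact Real.log_le_log (mul_pos (hω i) (gF_pos hσ _ z)) (pF_ge hσ hω i z)
    rw [log_gF hσ] at h1
    have := abs_nonneg (Real.log (gC d σ))
    have h2 := neg_abs_le (Real.log (ω i))
    have h3 := neg_abs_le (Real.log (gC d σ))
    nlinarith
  · have h1 : Real.log (pF d n x ω σ z) ≤ Real.log (gC d σ) :=
      Real.log_le_log hppos (pF_le_gC hσ hω hsum z)
    have h2 := le_abs_self (Real.log (gC d σ))
    have h3 := abs_nonneg (Real.log (ω i))
    nlinarith

/-- integrability of `gF · f` for `f` with quadratic growth -/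
lemma integrable_gF_mul (hσ : 0 < σ) (m : Fin d → ℝ) {f : (Fin d → ℝ) → ℝ}
    (hf : AEStronglyMeasurable f volume) {A B : ℝ} (hA : 0 ≤ A) (hB : 0 ≤ B)
    (hbd : ∀ z, |f z| ≤ A + B * ((z - m) ⬝ᵥ (z - m))) :
    Integrable (fun z => gF d σ m z * f z) := by
  have hb : (0:ℝ) < 1/(2*σ^2) := by positivity
  apply integrable_dom ((continuous_gF σ m).aestronglyMeasurable.mul hf)
    (mul_nonneg (gC_pos (d := d) hσ).le hA) (mul_nonneg (gC_pos (d := d) hσ).le hB) hb m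
  intro z
  simp only [Pi.mul_apply]
  rw [abs_mul, abs_of_pos (gF_pos hσ m z), gF]
  have hq := dotProduct_self_nonneg (z - m)
  calc gC d σ * Real.exp (-(1/(2*σ^2)) * ((z-m) ⬝ᵥ (z-m))) * |f z|
      ≤ gC d σ * Real.exp (-(1/(2*σ^2)) * ((z-m) ⬝ᵥ (z-m))) * (A + B * ((z-m) ⬝ᵥ (z-m))) := by
        apply mul_le_mul_of_nonneg_left (hbd z)
        exact mul_nonneg (gC_pos hσ).le (Real.exp_pos _).le
    _ = (gC d σ * A + gC d σ * B * ((z-m) ⬝ᵥ (z-m))) * Real.exp (-(1/(2*σ^2)) * ((z-m) ⬝ᵥ (z-m))) := by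
        ring

lemma integrable_gF_log_pF (hσ : 0 < σ) (hω : ∀ i, 0 < ω i) (hsum : ∑ i, ω i = 1) (i : Fin n) :
    Integrable (fun z => gF d σ (x i) z * Real.log (pF d n x ω σ z)) := by
  have hn : 0 < n := i.pos
  have hmeas : AEStronglyMeasurable (fun z => Real.log (pF d n x ω σ z)) volume :=
    ((continuous_pF σ).log (fun z => (pF_pos hσ hω hn z).ne')).aestronglyMeasurable
  exact integrable_gF_mul hσ (x i) hmeas
    (by positivity : (0:ℝ) ≤ |Real.log (gC d σ)| + |Real.log (ω i)|)
    (by positivity : (0:ℝ) ≤ 1/(2*σ^2)) (abs_log_pF_le hσ hω hsum i)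

lemma integrable_gF_log_gF (hσ : 0 < σ) (m : Fin d → ℝ) :
    Integrable (fun z => gF d σ m z * Real.log (gF d σ m z)) := by
  have hmeas : AEStronglyMeasurable (fun z => Real.log (gF d σ m z)) volume :=
    ((continuous_gF σ m).log (fun z => (gF_pos hσ m z).ne')).aestronglyMeasurable
  apply integrable_gF_mul hσ m hmeas (abs_nonneg (Real.log (gC d σ)))
    (by positivity : (0:ℝ) ≤ 1/(2*σ^2))
  intro z
  rw [log_gF hσ]
  have hq := dotProduct_self_nonneg (z - m)
  have hb : (0:ℝ) < 1/(2*σ^2) := by positivity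
  calc |Real.log (gC d σ) + -(1/(2*σ^2)) * ((z-m) ⬝ᵥ (z-m))|
      ≤ |Real.log (gC d σ)| + |(-(1/(2*σ^2))) * ((z-m) ⬝ᵥ (z-m))| := abs_add_le _ _
    _ = |Real.log (gC d σ)| + (1/(2*σ^2)) * ((z-m) ⬝ᵥ (z-m)) := by
        rw [abs_mul, abs_neg, abs_of_pos hb, abs_of_nonneg hq]

lemma gF_log_div_eq (hσ : 0 < σ) (hω : ∀ i, 0 < ω i) (hn : 0 < n) (i : Fin n) :
    (fun z => gF d σ (x i) z * Real.log (pF d n x ω σ z / gF d σ (x i) z))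
      = fun z => gF d σ (x i) z * Real.log (pF d n x ω σ z)
          - gF d σ (x i) z * Real.log (gF d σ (x i) z) := by
  funext z
  rw [Real.log_div (pF_pos hσ hω hn z).ne' (gF_pos hσ _ z).ne']
  ring

lemma integrable_gF_log_div (hσ : 0 < σ) (hω : ∀ i, 0 < ω i) (hsum : ∑ i, ω i = 1) (i : Fin n) :
    Integrable (fun z => gF d σ (x i) z * Real.log (pF d n x ω σ z / gF d σ (x i) z)) := by
  rw [gF_log_div_eq hσ hω i.pos i]
  exact (integrable_gF_log_pF hσ hω hsum i).sub (integrable_gF_log_gF hσ (x i))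

lemma integrable_pF (hσ : 0 < σ) : Integrable (pF d n x ω σ) :=
  integrable_finset_sum _ fun i _ => (integrable_gF hσ (x i)).const_mul (ω i)

lemma integral_pF (hσ : 0 < σ) (hsum : ∑ i, ω i = 1) : ∫ z, pF d n x ω σ z = 1 := by
  unfold pF
  rw [integral_finset_sum _ (fun i _ => (integrable_gF hσ (x i)).const_mul (ω i))]
  have : ∀ i : Fin n, ∫ z, ω i * gF d σ (x i) z = ω i := by
    intro i; rw [integral_const_mul, integral_gF hσ, mul_one]
  simp only [this]; exact hsum

/-- MI decomposes as a sum of (negated) KL terms -/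
lemma MI_eq (hσ : 0 < σ) (hω : ∀ i, 0 < ω i) (hsum : ∑ i, ω i = 1) (hn : 0 < n) :
    constNoiseMI d n x ω σ = -∑ i, ω i * KL d n x ω σ i := by
  have hrw : ∀ m : Fin d → ℝ, gaussDensity d m (σ^2 • (1 : Matrix (Fin d) (Fin d) ℝ)) = gF d σ m :=
    gaussDensity_eq hσ
  have hmix : (fun z => ∑ i, ω i * gaussDensity d (x i) (σ^2 • (1 : Matrix (Fin d) (Fin d) ℝ)) z)
      = pF d n x ω σ := by
    funext z; rw [pF.eq_def]; congr 1; funext i; rw [hrw]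
  rw [constNoiseMI, hmix]
  have hcomp : ∀ i : Fin n, diffEntropy d (gaussDensity d (x i) (σ^2 • (1 : Matrix (Fin d) (Fin d) ℝ)))
      = - ∫ z, gF d σ (x i) z * Real.log (gF d σ (x i) z) := by
    intro i; rw [diffEntropy, hrw]
  have hmixent : diffEntropy d (pF d n x ω σ)
      = - ∑ i, ω i * ∫ z, gF d σ (x i) z * Real.log (pF d n x ω σ z) := by
    rw [diffEntropy]
    congr 1
    have : (fun z => pF d n x ω σ z * Real.log (pF d n x ω σ z))
        = fun z => ∑ i, ω i * (gF d σ (x i) z * Real.log (pF d n x ω σ z)) := by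
      funext z
      rw [pF.eq_def, Finset.sum_mul]
      congr 1; funext i; ring
    rw [this, integral_finset_sum _
      (fun i _ => ((integrable_gF_log_pF hσ hω hsum i).const_mul (ω i)))]
    congr 1; funext i
    rw [integral_const_mul]
  have hKL : ∀ i : Fin n, KL d n x ω σ i
      = (∫ z, gF d σ (x i) z * Real.log (pF d n x ω σ z))
        - ∫ z, gF d σ (x i) z * Real.log (gF d σ (x i) z) := by
    intro i
    rw [KL.eq_def, gF_log_div_eq hσ hω hn i,
      integral_sub (integrable_gF_log_pF hσ hω hsum i) (integrable_gF_log_gF hσ (x i))]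
  rw [hmixent]
  simp only [hcomp, hKL, mul_sub, mul_neg]
  rw [Finset.sum_sub_distrib, Finset.sum_neg_distrib]
  ring

lemma dotProduct_self_pos {v : Fin d → ℝ} (hv : v ≠ 0) : 0 < v ⬝ᵥ v := by
  rcases (dotProduct_self_nonneg v).lt_or_eq with h | h
  · exact h
  · exfalso; apply hv
    funext i
    have h0 : ∀ k ∈ Finset.univ, (0:ℝ) ≤ v k * v k := fun k _ => mul_self_nonneg _
    have := (Finset.sum_eq_zero_iff_of_nonneg h0).1 h.symm i (Finset.mem_univ i)
    exact mul_self_eq_zero.1 this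

lemma gF_log_le_sub (hσ : 0 < σ) (hω : ∀ i, 0 < ω i) (hn : 0 < n) (i : Fin n) (z : Fin d → ℝ) :
    gF d σ (x i) z * Real.log (pF d n x ω σ z / gF d σ (x i) z)
      ≤ pF d n x ω σ z - gF d σ (x i) z := by
  have hg := gF_pos hσ (x i) z
  have hp := pF_pos (x := x) hσ hω hn z
  have h := Real.log_le_sub_one_of_pos (div_pos hp hg)
  have h2 := mul_le_mul_of_nonneg_left h hg.le
  calc gF d σ (x i) z * Real.log (pF d n x ω σ z / gF d σ (x i) z)
      ≤ gF d σ (x i) z * (pF d n x ω σ z / gF d σ (x i) z - 1) := h2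
    _ = pF d n x ω σ z - gF d σ (x i) z := by field_simp

lemma KL_nonpos (hσ : 0 < σ) (hω : ∀ i, 0 < ω i) (hsum : ∑ i, ω i = 1) (i : Fin n) :
    KL d n x ω σ i ≤ 0 := by
  have hn : 0 < n := i.pos
  have h := integral_mono (integrable_gF_log_div hσ hω hsum i)
    ((integrable_pF hσ).sub (integrable_gF hσ (x i))) (gF_log_le_sub hσ hω hn i)
  simp only [Pi.sub_apply] at h
  rw [integral_sub (integrable_pF hσ) (integrable_gF hσ (x i)), integral_pF hσ hsum,
    integral_gF hσ] at h
  simpa [KL.eq_def] using h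

lemma KL_neg (hσ : 0 < σ) (hω : ∀ i, 0 < ω i) (hsum : ∑ i, ω i = 1)
    (hx : Function.Injective x) (i j : Fin n) (hij : i ≠ j) :
    KL d n x ω σ i < 0 := by
  have hn : 0 < n := i.pos
  have hg := fun z => gF_pos (d := d) hσ (x i) z
  have hp := fun z => pF_pos (x := x) hσ hω hn z
  set b : ℝ := 1/(2*σ^2) with hb_def
  have hb : 0 < b := by rw [hb_def]; positivity
  set v : Fin d → ℝ := x j - x i with hv_def
  have hv : v ≠ 0 := sub_ne_zero.2 fun h => hij (hx h).symm
  have hQv : 0 < v ⬝ᵥ v := dotProduct_self_pos hv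
  set D : ℝ := b * (v ⬝ᵥ v) with hD_def
  have hD : 0 < D := mul_pos hb hQv
  set L : ℝ := -Real.log (ω j) with hL_def
  set t : ℝ := (1 + L/D)/2 + 1 with ht_def
  set z₀ : Fin d → ℝ := x i + t • v with hz₀_def
  -- key: ω j * gF j z₀ > gF i z₀
  have hzi : z₀ - x i = t • v := by rw [hz₀_def]; abel
  have hzj : z₀ - x j = (t-1) • v := by
    rw [hz₀_def, hv_def, sub_smul, one_smul]; abel
  have hQz : ∀ s : ℝ, (s • v) ⬝ᵥ (s • v) = s^2 * (v ⬝ᵥ v) := by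
    intro s; rw [smul_dotProduct, dotProduct_smul, smul_eq_mul, smul_eq_mul]; ring
  have hkey : gF d σ (x i) z₀ < ω j * gF d σ (x j) z₀ := by
    rw [gF, gF, hzi, hzj, hQz, hQz]
    rw [show ω j * (gC d σ * Real.exp (-(1/(2*σ^2)) * ((t-1)^2 * (v ⬝ᵥ v))))
        = gC d σ * (Real.exp (Real.log (ω j)) * Real.exp (-(1/(2*σ^2)) * ((t-1)^2 * (v ⬝ᵥ v))))
      by rw [Real.exp_log (hω j)]; ring, ← Real.exp_add]
    apply mul_lt_mul_of_pos_left _ (gC_pos hσ)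
    apply Real.exp_lt_exp.2
    have expand : Real.log (ω j) + -(1/(2*σ^2)) * ((t-1)^2 * (v ⬝ᵥ v))
        - (-(1/(2*σ^2)) * (t^2 * (v ⬝ᵥ v))) = (2*t - 1) * D - L := by
      rw [hD_def, hL_def, hb_def]; ring
    have hgt : (2*t - 1) * D - L > 0 := by
      have h2 : (2*t - 1) * D = 2*D + L := by
        rw [ht_def]; field_simp; ring
      rw [h2]; linarith
    clear_value b v D L t
    linarith
  have hpz : gF d σ (x i) z₀ < pF d n x ω σ z₀ := by
    have hsub : ({i, j} : Finset (Fin n)) ⊆ Finset.univ := Finset.subset_univ _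
    have hpFeq : pF d n x ω σ z₀ = ∑ k, ω k * gF d σ (x k) z₀ := rfl
    have h2 : ∑ k ∈ ({i, j} : Finset (Fin n)), ω k * gF d σ (x k) z₀ ≤ pF d n x ω σ z₀ := by
      rw [hpFeq]
      exact Finset.sum_le_sum_of_subset_of_nonneg hsub
        (fun k _ _ => (mul_pos (hω k) (gF_pos hσ _ _)).le)
    rw [Finset.sum_pair hij] at h2
    nlinarith [mul_pos (hω i) (hg z₀)]
  -- strict integral inequality
  set F : (Fin d → ℝ) → ℝ := fun z =>
    pF d n x ω σ z - gF d σ (x i) z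
      - gF d σ (x i) z * Real.log (pF d n x ω σ z / gF d σ (x i) z) with hF_def
  have hFnonneg : ∀ z, 0 ≤ F z := fun z => sub_nonneg.2 (gF_log_le_sub hσ hω hn i z)
  have hFint : Integrable F :=
    ((integrable_pF hσ).sub (integrable_gF hσ (x i))).sub (integrable_gF_log_div hσ hω hsum i)
  have hFcont : Continuous F := by
    apply Continuous.sub ((continuous_pF σ).sub (continuous_gF σ (x i)))
    apply (continuous_gF σ (x i)).mul
    apply Continuous.log ((continuous_pF σ).div (continuous_gF σ (x i)) fun z => (hg z).ne')
    exact fun z => (div_pos (hp z) (hg z)).ne'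
  have hFz₀ : 0 < F z₀ := by
    have hr : 1 < pF d n x ω σ z₀ / gF d σ (x i) z₀ := (one_lt_div (hg z₀)).2 hpz
    have hlog := Real.log_lt_sub_one_of_pos (lt_trans one_pos hr) hr.ne'
    have hmul := mul_lt_mul_of_pos_left hlog (hg z₀)
    have heq : gF d σ (x i) z₀ * (pF d n x ω σ z₀ / gF d σ (x i) z₀ - 1)
        = pF d n x ω σ z₀ - gF d σ (x i) z₀ := by
      rw [mul_sub, mul_div_cancel₀ _ (hg z₀).ne', mul_one]
    have hFe : F z₀ = pF d n x ω σ z₀ - gF d σ (x i) z₀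
        - gF d σ (x i) z₀ * Real.log (pF d n x ω σ z₀ / gF d σ (x i) z₀) := rfl
    rw [hFe]
    linarith
  have hIntPos : 0 < ∫ z, F z := by
    rw [integral_pos_iff_support_of_nonneg hFnonneg hFint]
    have hUopen : IsOpen {z | 0 < F z} := isOpen_lt continuous_const hFcont
    have hsub2 : {z | 0 < F z} ⊆ Function.support F := fun z hz => ne_of_gt hz
    calc (0 : ENNReal) < volume {z | 0 < F z} := hUopen.measure_pos volume ⟨z₀, hFz₀⟩
      _ ≤ volume (Function.support F) := measure_mono hsub2
  have hIF : ∫ z, F z = -KL d n x ω σ i := by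
    have hstep : ∫ z, F z = ∫ z, (pF d n x ω σ z - gF d σ (x i) z)
        - gF d σ (x i) z * Real.log (pF d n x ω σ z / gF d σ (x i) z) := rfl
    have int1 : Integrable (fun z => pF d n x ω σ z - gF d σ (x i) z) :=
      (integrable_pF hσ).sub (integrable_gF hσ (x i))
    rw [hstep, integral_sub int1 (integrable_gF_log_div hσ hω hsum i),
      integral_sub (integrable_pF hσ) (integrable_gF hσ (x i)), integral_pF hσ hsum,
      integral_gF hσ, KL.eq_def]
    ring
  rw [hIF] at hIntPos
  linarith

/-- the likelihood ratio after rescaling `z = x i + σ • w` -/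
noncomputable def RF (d n : ℕ) (x : Fin n → (Fin d → ℝ)) (ω : Fin n → ℝ) (σ : ℝ)
    (i : Fin n) (w : Fin d → ℝ) : ℝ :=
  ∑ j, ω j * Real.exp ((w ⬝ᵥ (x j - x i))/σ - ((x j - x i) ⬝ᵥ (x j - x i))/(2*σ^2))

lemma continuous_dot_left (u : Fin d → ℝ) : Continuous fun w : Fin d → ℝ => w ⬝ᵥ u := by
  unfold dotProduct
  exact continuous_finset_sum _ fun i _ => (continuous_apply i).mul continuous_const

lemma continuous_RF (σ : ℝ) (i : Fin n) : Continuous (RF d n x ω σ i) := by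
  unfold RF
  refine continuous_finset_sum _ fun j _ => continuous_const.mul (Real.continuous_exp.comp ?_)
  exact ((continuous_dot_left _).div_const σ).sub continuous_const

lemma RF_ge (hσ : 0 < σ) (hω : ∀ i, 0 < ω i) (i : Fin n) (w : Fin d → ℝ) :
    ω i ≤ RF d n x ω σ i w := by
  have h0 : ω i * Real.exp ((w ⬝ᵥ (x i - x i))/σ - ((x i - x i) ⬝ᵥ (x i - x i))/(2*σ^2)) = ω i := by
    rw [sub_self, dotProduct_zero, zero_dotProduct, zero_div, zero_div, sub_zero, Real.exp_zero,
      mul_one]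
  have hr : RF d n x ω σ i w = ∑ j, ω j *
      Real.exp ((w ⬝ᵥ (x j - x i))/σ - ((x j - x i) ⬝ᵥ (x j - x i))/(2*σ^2)) := rfl
  rw [hr, ← h0]
  exact Finset.single_le_sum
    (f := fun j => ω j * Real.exp ((w ⬝ᵥ (x j - x i))/σ - ((x j - x i) ⬝ᵥ (x j - x i))/(2*σ^2)))
    (fun j _ => (mul_pos (hω j) (Real.exp_pos _)).le) (Finset.mem_univ i)

lemma RF_pos (hσ : 0 < σ) (hω : ∀ i, 0 < ω i) (i : Fin n) (w : Fin d → ℝ) :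
    0 < RF d n x ω σ i w := lt_of_lt_of_le (hω i) (RF_ge hσ hω i w)

lemma RF_le (hσ : 0 < σ) (hω : ∀ i, 0 < ω i) (hsum : ∑ i, ω i = 1) (i : Fin n)
    (w : Fin d → ℝ) : RF d n x ω σ i w ≤ Real.exp ((w ⬝ᵥ w)/2) := by
  have hexp : ∀ j : Fin n, (w ⬝ᵥ (x j - x i))/σ - ((x j - x i) ⬝ᵥ (x j - x i))/(2*σ^2)
      ≤ (w ⬝ᵥ w)/2 := by
    intro j
    have h := two_dot_le w (σ⁻¹ • (x j - x i))
    simp only [dotProduct_smul, smul_dotProduct, smul_eq_mul] at h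
    -- h : 2 * (σ⁻¹ * (w ⬝ᵥ (x j - x i))) ≤ w ⬝ᵥ w + σ⁻¹ * (σ⁻¹ * ((x j - x i) ⬝ᵥ (x j - x i)))
    have e1 : w ⬝ᵥ (x j - x i) / σ = σ⁻¹ * (w ⬝ᵥ (x j - x i)) := by
      rw [div_eq_inv_mul]
    have e2 : ((x j - x i) ⬝ᵥ (x j - x i))/(2*σ^2)
        = σ⁻¹ * (σ⁻¹ * ((x j - x i) ⬝ᵥ (x j - x i))) / 2 := by
      rw [eq_div_iff (two_ne_zero)]
      field_simp
    rw [e1, e2]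
    linarith
  calc RF d n x ω σ i w ≤ ∑ j, ω j * Real.exp ((w ⬝ᵥ w)/2) := by
        apply Finset.sum_le_sum
        intro j _
        exact mul_le_mul_of_nonneg_left (Real.exp_le_exp.2 (hexp j)) (hω j).le
    _ = Real.exp ((w ⬝ᵥ w)/2) := by rw [← Finset.sum_mul, hsum, one_mul]

lemma abs_log_RF_le (hσ : 0 < σ) (hω : ∀ i, 0 < ω i) (hsum : ∑ i, ω i = 1) (i : Fin n)
    (w : Fin d → ℝ) :
    |Real.log (RF d n x ω σ i w)| ≤ |Real.log (ω i)| + (w ⬝ᵥ w)/2 := by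
  have hq := dotProduct_self_nonneg w
  have h1 : Real.log (ω i) ≤ Real.log (RF d n x ω σ i w) :=
    Real.log_le_log (hω i) (RF_ge hσ hω i w)
  have h2 : Real.log (RF d n x ω σ i w) ≤ (w ⬝ᵥ w)/2 := by
    calc Real.log (RF d n x ω σ i w) ≤ Real.log (Real.exp ((w ⬝ᵥ w)/2)) :=
          Real.log_le_log (RF_pos hσ hω i w) (RF_le hσ hω hsum i w)
      _ = (w ⬝ᵥ w)/2 := Real.log_exp _
  rw [abs_le]
  constructor
  · have := neg_abs_le (Real.log (ω i)); linarith
  · have h3 := le_abs_self (Real.log (ω i))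
    have h4 := abs_nonneg (Real.log (ω i))
    linarith

lemma sigma_pow_mul_gC (hσ : 0 < σ) : σ^d * gC d σ = (2*π) ^ (-(d:ℝ)/2) := by
  rw [gC, ← mul_assoc, mul_comm (σ^d), mul_assoc, ← Real.rpow_natCast σ d,
    ← Real.rpow_add hσ, show (d:ℝ) + -(d:ℝ) = 0 by ring, Real.rpow_zero, mul_one]

/-- change of variables: KL as a fixed-Gaussian integral of `log RF` -/
lemma KL_eq_RF (hσ : 0 < σ) (hω : ∀ i, 0 < ω i) (hn : 0 < n) (i : Fin n) :
    KL d n x ω σ i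
      = (2*π) ^ (-(d:ℝ)/2) * ∫ w, Real.exp (-((w ⬝ᵥ w)/2)) * Real.log (RF d n x ω σ i w) := by
  have hσ2 : σ ≠ 0 := hσ.ne'
  -- pointwise identity at z = x i + σ • w
  have hpt : ∀ w : Fin d → ℝ,
      gF d σ (x i) (x i + σ • w) * Real.log (pF d n x ω σ (x i + σ • w) / gF d σ (x i) (x i + σ • w))
        = gC d σ * (Real.exp (-((w ⬝ᵥ w)/2)) * Real.log (RF d n x ω σ i w)) := by
    intro w
    have hgi : gF d σ (x i) (x i + σ • w) = gC d σ * Real.exp (-((w ⬝ᵥ w)/2)) := by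
      rw [gF]
      congr 2
      rw [show x i + σ • w - x i = σ • w by abel, smul_dotProduct, dotProduct_smul,
        smul_eq_mul, smul_eq_mul]
      field_simp
    have hpz : pF d n x ω σ (x i + σ • w) = gF d σ (x i) (x i + σ • w) * RF d n x ω σ i w := by
      rw [hgi, pF.eq_def, RF.eq_def, Finset.mul_sum]
      apply Finset.sum_congr rfl
      intro j _
      rw [gF]
      have hsub : x i + σ • w - x j = σ • w - (x j - x i) := by abel
      rw [hsub, dot_expand]
      simp only [smul_dotProduct, dotProduct_smul, smul_eq_mul]
      rw [show -(1/(2*σ^2)) * (σ * (σ * (w ⬝ᵥ w)) - 2*(σ * (w ⬝ᵥ (x j - x i)))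
            + (x j - x i) ⬝ᵥ (x j - x i))
          = -((w ⬝ᵥ w)/2) + ((w ⬝ᵥ (x j - x i))/σ - ((x j - x i) ⬝ᵥ (x j - x i))/(2*σ^2)) from by
        field_simp; ring, Real.exp_add]
      ring
    rw [hpz, hgi]
    have hgpos : (0:ℝ) < gC d σ * Real.exp (-((w ⬝ᵥ w)/2)) := mul_pos (gC_pos hσ) (Real.exp_pos _)
    rw [mul_div_cancel_left₀ _ (by rw [← hgi]; exact (gF_pos hσ _ _).ne')]
    ring
  -- translation + scaling
  set Φ : (Fin d → ℝ) → ℝ := fun z =>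
    gF d σ (x i) z * Real.log (pF d n x ω σ z / gF d σ (x i) z) with hΦ
  have step1 : KL d n x ω σ i = ∫ z, Φ (x i + z) := by
    rw [KL.eq_def, ← integral_add_left_eq_self Φ (x i)]
  have step2 : ∫ z, Φ (x i + z) = σ^d * ∫ w, Φ (x i + σ • w) := by
    rw [Measure.integral_comp_smul volume (fun z => Φ (x i + z)) σ, Module.finrank_pi,
      Fintype.card_fin, abs_of_pos (by positivity : (0:ℝ) < ((σ^d)⁻¹)), smul_eq_mul,
      ← mul_assoc, mul_inv_cancel₀ (by positivity : (σ:ℝ)^d ≠ 0), one_mul]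
  rw [step1, step2]
  have : ∀ w, Φ (x i + σ • w) = gC d σ * (Real.exp (-((w ⬝ᵥ w)/2)) * Real.log (RF d n x ω σ i w)) :=
    hpt
  simp_rw [this, integral_const_mul, ← mul_assoc, mul_comm (σ^d) (gC d σ)]
  rw [mul_comm (gC d σ) (σ^d), sigma_pow_mul_gC hσ]

lemma integrable_bound_RF (i : Fin n) :
    Integrable (fun w : Fin d → ℝ =>
      Real.exp (-((w ⬝ᵥ w)/2)) * (|Real.log (ω i)| + (w ⬝ᵥ w)/2)) := by
  have hcont : Continuous (fun w : Fin d → ℝ =>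
      Real.exp (-((w ⬝ᵥ w)/2)) * (|Real.log (ω i)| + (w ⬝ᵥ w)/2)) := by
    have hq : Continuous fun w : Fin d → ℝ => w ⬝ᵥ w := by
      unfold dotProduct
      exact continuous_finset_sum _ fun k _ => (continuous_apply k).mul (continuous_apply k)
    exact ((hq.div_const 2).neg.rexp).mul (continuous_const.add (hq.div_const 2))
  apply integrable_dom hcont.aestronglyMeasurable (abs_nonneg (Real.log (ω i)))
    (by norm_num : (0:ℝ) ≤ (1:ℝ)/2) (by norm_num : (0:ℝ) < (1:ℝ)/2) (0 : Fin d → ℝ)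
  intro w
  have hq0 := dotProduct_self_nonneg w
  have habs : |Real.exp (-((w ⬝ᵥ w)/2)) * (|Real.log (ω i)| + (w ⬝ᵥ w)/2)|
      = Real.exp (-((w ⬝ᵥ w)/2)) * (|Real.log (ω i)| + (w ⬝ᵥ w)/2) := by
    apply abs_of_nonneg
    apply mul_nonneg (Real.exp_pos _).le
    have := abs_nonneg (Real.log (ω i))
    linarith
  rw [habs, sub_zero, show -((w ⬝ᵥ w)/2) = -(1/2) * (w ⬝ᵥ w) by ring]
  apply le_of_eq
  ring

lemma tendsto_log_RF (hω : ∀ i, 0 < ω i) (hx : Function.Injective x) (i : Fin n)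
    (w : Fin d → ℝ) :
    Tendsto (fun σ => Real.log (RF d n x ω σ i w)) (nhdsWithin 0 (Set.Ioi 0))
      (nhds (Real.log (ω i))) := by
  have hsumlim : Tendsto (fun σ => RF d n x ω σ i w) (nhdsWithin 0 (Set.Ioi 0)) (nhds (ω i)) := by
    have hval : (ω i) = ∑ j, (if j = i then ω j else 0) := by
      rw [Finset.sum_ite_eq' Finset.univ i ω]; simp
    rw [hval]
    have hRF : (fun σ => RF d n x ω σ i w) = fun σ => ∑ j, ω j *
        Real.exp ((w ⬝ᵥ (x j - x i))/σ - ((x j - x i) ⬝ᵥ (x j - x i))/(2*σ^2)) := rfl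
    rw [hRF]
    apply tendsto_finset_sum
    intro j _
    by_cases hj : j = i
    · subst hj
      have hconst : (fun σ : ℝ => ω j *
          Real.exp ((w ⬝ᵥ (x j - x j))/σ - ((x j - x j) ⬝ᵥ (x j - x j))/(2*σ^2)))
          = fun _ => ω j := by
        funext σ
        rw [sub_self, dotProduct_zero, zero_dotProduct, zero_div, zero_div, sub_zero,
          Real.exp_zero, mul_one]
      rw [hconst, if_pos rfl]
      exact tendsto_const_nhds
    · rw [if_neg hj]
      have hQv : 0 < (x j - x i) ⬝ᵥ (x j - x i) :=
        dotProduct_self_pos (sub_ne_zero.2 fun h => hj (hx h))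
      have hlin : Tendsto (fun σ : ℝ => (w ⬝ᵥ (x j - x i)) * σ - ((x j - x i) ⬝ᵥ (x j - x i))/2)
          (nhdsWithin 0 (Set.Ioi 0)) (nhds (-(((x j - x i) ⬝ᵥ (x j - x i))/2))) := by
        have hc : Continuous fun σ : ℝ => (w ⬝ᵥ (x j - x i)) * σ
            - ((x j - x i) ⬝ᵥ (x j - x i))/2 := (continuous_const.mul continuous_id).sub
          continuous_const
        have h0 : Tendsto (fun σ : ℝ => (w ⬝ᵥ (x j - x i)) * σ
            - ((x j - x i) ⬝ᵥ (x j - x i))/2) (nhdsWithin 0 (Set.Ioi 0))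
            (nhds ((w ⬝ᵥ (x j - x i)) * 0 - ((x j - x i) ⬝ᵥ (x j - x i))/2)) :=
          (hc.tendsto 0).mono_left nhdsWithin_le_nhds
        simpa using h0
      have hsq : Tendsto (fun σ : ℝ => σ⁻¹ * σ⁻¹) (nhdsWithin 0 (Set.Ioi 0)) atTop :=
        tendsto_inv_nhdsGT_zero.atTop_mul_atTop₀ tendsto_inv_nhdsGT_zero
      have hbot : Tendsto (fun σ : ℝ => (σ⁻¹ * σ⁻¹) *
          ((w ⬝ᵥ (x j - x i)) * σ - ((x j - x i) ⬝ᵥ (x j - x i))/2))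
          (nhdsWithin 0 (Set.Ioi 0)) atBot :=
        hsq.atTop_mul_neg (by linarith) hlin
      have hexp : Tendsto (fun σ : ℝ =>
          (w ⬝ᵥ (x j - x i))/σ - ((x j - x i) ⬝ᵥ (x j - x i))/(2*σ^2))
          (nhdsWithin 0 (Set.Ioi 0)) atBot := by
        apply hbot.congr'
        filter_upwards [self_mem_nhdsWithin] with σ (hσ : σ ∈ Set.Ioi 0)
        have hσ0 : σ ≠ 0 := ne_of_gt hσ
        field_simp
      have hcomp := (Real.tendsto_exp_atBot).comp hexp
      have hfin := hcomp.const_mul (ω j)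
      rw [mul_zero] at hfin
      exact hfin
  exact ((Real.continuousAt_log (hω i).ne').tendsto.comp hsumlim)

lemma tendsto_J (hω : ∀ i, 0 < ω i) (hsum : ∑ i, ω i = 1) (hx : Function.Injective x)
    (i : Fin n) :
    Tendsto (fun σ => ∫ w : Fin d → ℝ, Real.exp (-((w ⬝ᵥ w)/2)) * Real.log (RF d n x ω σ i w))
      (nhdsWithin 0 (Set.Ioi 0)) (nhds (Real.log (ω i) * (2*π) ^ ((d:ℝ)/2))) := by
  have hq : Continuous fun w : Fin d → ℝ => w ⬝ᵥ w := by
    unfold dotProduct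
    exact continuous_finset_sum _ fun k _ => (continuous_apply k).mul (continuous_apply k)
  have hval : ∫ w : Fin d → ℝ, Real.exp (-((w ⬝ᵥ w)/2)) * Real.log (ω i)
      = Real.log (ω i) * (2*π) ^ ((d:ℝ)/2) := by
    rw [integral_mul_const]
    have harg : (fun w : Fin d → ℝ => Real.exp (-((w ⬝ᵥ w)/2)))
        = fun w => Real.exp (-(1/2) * ((w - 0) ⬝ᵥ (w - 0))) := by
      funext w; rw [sub_zero]; congr 1; ring
    rw [harg, integral_exp_neg_q (by norm_num) 0]
    rw [show π / ((1:ℝ)/2) = 2*π by field_simp]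
    ring
  rw [← hval]
  apply tendsto_integral_filter_of_dominated_convergence
    (fun w => Real.exp (-((w ⬝ᵥ w)/2)) * (|Real.log (ω i)| + (w ⬝ᵥ w)/2))
  · filter_upwards [self_mem_nhdsWithin] with σ (hσ : σ ∈ Set.Ioi 0)
    apply Continuous.aestronglyMeasurable
    exact ((hq.div_const 2).neg.rexp).mul
      ((continuous_RF σ i).log (fun w => (RF_pos hσ hω i w).ne'))
  · filter_upwards [self_mem_nhdsWithin] with σ (hσ : σ ∈ Set.Ioi 0)
    apply Filter.Eventually.of_forall
    intro w
    rw [Real.norm_eq_abs, abs_mul, abs_of_pos (Real.exp_pos _)]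
    exact mul_le_mul_of_nonneg_left (abs_log_RF_le hσ hω hsum i w) (Real.exp_pos _).le
  · exact integrable_bound_RF i
  · apply Filter.Eventually.of_forall
    intro w
    exact (tendsto_log_RF hω hx i w).const_mul _

lemma KL_tendsto (hω : ∀ i, 0 < ω i) (hsum : ∑ i, ω i = 1) (hx : Function.Injective x)
    (i : Fin n) :
    Tendsto (fun σ => KL d n x ω σ i) (nhdsWithin 0 (Set.Ioi 0))
      (nhds (Real.log (ω i))) := by
  have hn : 0 < n := i.pos
  have h := (tendsto_J hω hsum hx i).const_mul ((2*π) ^ (-(d:ℝ)/2))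
  have hlim : (2*π) ^ (-(d:ℝ)/2) * (Real.log (ω i) * (2*π) ^ ((d:ℝ)/2)) = Real.log (ω i) := by
    rw [mul_comm (Real.log (ω i)), ← mul_assoc, ← Real.rpow_add (by positivity),
      show -(d:ℝ)/2 + (d:ℝ)/2 = 0 by ring, Real.rpow_zero, one_mul]
  rw [hlim] at h
  apply h.congr'
  filter_upwards [self_mem_nhdsWithin] with σ (hσ : σ ∈ Set.Ioi 0)
  exact (KL_eq_RF hσ hω hn i).symm

end Mix

/-- for a discrete `X` taking at least two distinct values with positive
probability and independent noise `U ~ N(0, σ²I)`, `MI(X; X + U) > 0` for every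
`σ > 0`, and `MI(X; X + U) → H(X) = −∑ ω i log ω i` as `σ → 0⁺`. -/
theorem const_gaussian_noise_mi
    (d n : ℕ) (hn : 2 ≤ n) (x : Fin n → (Fin d → ℝ)) (hx : Function.Injective x)
    (ω : Fin n → ℝ) (hω : ∀ i, 0 < ω i) (hsum : ∑ i, ω i = 1) :
    (∀ σ : ℝ, 0 < σ → 0 < constNoiseMI d n x ω σ) ∧
      Tendsto (constNoiseMI d n x ω) (nhdsWithin 0 (Set.Ioi 0))
        (nhds (-∑ i, ω i * Real.log (ω i))) := by
  have hn' : 0 < n := lt_of_lt_of_le two_pos hn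
  constructor
  · intro σ hσ
    rw [MI_eq hσ hω hsum hn']
    set i0 : Fin n := ⟨0, hn'⟩ with hi0
    set j0 : Fin n := ⟨1, lt_of_lt_of_le one_lt_two hn⟩ with hj0
    have hij : i0 ≠ j0 := by
      simp [hi0, hj0, Fin.ext_iff]
    have hneg : ∑ i, ω i * KL d n x ω σ i < 0 := by
      calc ∑ i, ω i * KL d n x ω σ i < ∑ _i : Fin n, (0:ℝ) :=
            Finset.sum_lt_sum
              (fun i _ => mul_nonpos_of_nonneg_of_nonpos (hω i).le (KL_nonpos hσ hω hsum i))
              ⟨i0, Finset.mem_univ _,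
                mul_neg_of_pos_of_neg (hω i0) (KL_neg hσ hω hsum hx i0 j0 hij)⟩
        _ = 0 := Finset.sum_const_zero
    linarith
  · have htd : Tendsto (fun σ => -∑ i, ω i * KL d n x ω σ i) (nhdsWithin 0 (Set.Ioi 0))
        (nhds (-∑ i, ω i * Real.log (ω i))) :=
      (tendsto_finset_sum _ (fun i _ => (KL_tendsto hω hsum hx i).const_mul (ω i))).neg
    apply htd.congr'
    filter_upwards [self_mem_nhdsWithin] with σ (hσ : σ ∈ Set.Ioi 0)
    exact (MI_eq hσ hω hsum hn').symm
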